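/- Let A ∈ GL₂ℤ and suppose G_A = ℤ² ⋊_A ℤ is generated by two elements. Then every ordered 2-element generating set of G_A is Nielsen equivalent to a pair of the form ((v, 0), ((0,0), 1)) for some v ∈ ℤ² with ℤv + ℤ(Av) = ℤ². -/

import Mathlib

open Matrix

abbrev GL2Z := GL (Fin 2) ℤ

/-- The automorphism of `ℤ²` induced by `A ∈ GL₂ℤ`. -/
def glToAddAut (A : GL2Z) : (Fin 2 → ℤ) ≃+ (Fin 2 → ℤ) :=
  (Matrix.GeneralLinearGroup.toLin A).toLinearEquiv.toAddEquiv

/-- The action of `ℤ` on `ℤ²` with `1` acting as `A`. -/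
def phiA (A : GL2Z) : Multiplicative ℤ →* MulAut (Multiplicative (Fin 2 → ℤ)) :=
  zpowersHom _ (AddEquiv.toMultiplicative (glToAddAut A))

/-- `G_A = ℤ² ⋊_A ℤ`. -/
abbrev GA (A : GL2Z) := (Multiplicative (Fin 2 → ℤ)) ⋊[phiA A] (Multiplicative ℤ)


/-- Nielsen equivalence of ordered generating `n`-tuples: the two induced epimorphisms
from the free group differ by precomposition with an automorphism. -/
def NielsenEquiv {G : Type*} [Group G] {n : ℕ} (S T : Fin n → G) : Prop :=
  ∃ φ : FreeGroup (Fin n) ≃* FreeGroup (Fin n),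
    (FreeGroup.lift S).comp φ.toMonoidHom = FreeGroup.lift T

namespace NielsenAux

section general
variable {G : Type*} [Group G] {n : ℕ}

lemma ne_refl (S : Fin n → G) : NielsenEquiv S S :=
  ⟨MulEquiv.refl _, by ext i; simp⟩

lemma ne_trans {S T U : Fin n → G} (h1 : NielsenEquiv S T) (h2 : NielsenEquiv T U) :
    NielsenEquiv S U := by
  obtain ⟨φ, hφ⟩ := h1; obtain ⟨ψ, hψ⟩ := h2
  refine ⟨ψ.trans φ, ?_⟩
  ext i
  have h1' := DFunLike.congr_fun hφ (ψ (FreeGroup.of i))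
  have h2' := DFunLike.congr_fun hψ (FreeGroup.of i)
  simp only [MonoidHom.comp_apply, MulEquiv.coe_toMonoidHom] at h1' h2' ⊢
  simp [MulEquiv.trans_apply, h1', h2']

lemma ne_step (S : Fin n → G) (f g : Fin n → FreeGroup (Fin n))
    (h₁ : ∀ i, FreeGroup.lift g (f i) = FreeGroup.of i)
    (h₂ : ∀ i, FreeGroup.lift f (g i) = FreeGroup.of i)
    (T : Fin n → G) (hT : ∀ i, T i = FreeGroup.lift S (f i)) :
    NielsenEquiv S T := by
  have key : ∀ (a b : Fin n → FreeGroup (Fin n)),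
      (∀ i, FreeGroup.lift b (a i) = FreeGroup.of i) →
      (FreeGroup.lift b).comp (FreeGroup.lift a) = MonoidHom.id _ := by
    intro a b h
    apply FreeGroup.ext_hom
    intro i; simp [h i]
  refine ⟨{ toFun := FreeGroup.lift f, invFun := FreeGroup.lift g,
            left_inv := fun x => by
              have := DFunLike.congr_fun (key f g h₁) x; simpa using this,
            right_inv := fun x => by
              have := DFunLike.congr_fun (key g f h₂) x; simpa using this,
            map_mul' := map_mul _ }, ?_⟩
  apply FreeGroup.ext_hom
  intro i
  simp [hT i]

lemma ne_closure {S T : Fin n → G}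
    (h : NielsenEquiv S T) (hS : Subgroup.closure (Set.range S) = ⊤) :
    Subgroup.closure (Set.range T) = ⊤ := by
  obtain ⟨φ, hφ⟩ := h
  rw [← FreeGroup.range_lift_eq_closure] at hS ⊢
  rw [← hφ, MonoidHom.range_comp]
  have : φ.toMonoidHom.range = ⊤ := MonoidHom.range_eq_top_of_surjective _ φ.surjective
  rw [this, ← MonoidHom.range_eq_map, hS]

lemma range_pair (x y : G) : Set.range ![x, y] = {x, y} := by
  ext g
  constructor
  · rintro ⟨i, rfl⟩; fin_cases i <;> simp
  · rintro (rfl | rfl)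
    · exact ⟨0, rfl⟩
    · exact ⟨1, rfl⟩

open FreeGroup in
lemma move_swap (x y : G) : NielsenEquiv ![x, y] ![y, x] := by
  apply ne_step _ ![of 1, of 0] ![of 1, of 0] <;>
    intro i <;> fin_cases i <;> simp

open FreeGroup in
lemma move_inv_fst (x y : G) : NielsenEquiv ![x, y] ![x⁻¹, y] := by
  apply ne_step _ ![(of 0)⁻¹, of 1] ![(of 0)⁻¹, of 1] <;>
    intro i <;> fin_cases i <;> simp

open FreeGroup in
lemma move_mul_right_pow (x y : G) (k : ℤ) : NielsenEquiv ![x, y] ![x * y ^ k, y] := by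
  apply ne_step _ ![of 0 * of 1 ^ k, of 1] ![of 0 * of 1 ^ (-k), of 1] <;>
    intro i <;> fin_cases i <;>
      simp [mul_assoc, ← _root_.zpow_add]

open FreeGroup in
lemma move_mul_left_snd_pow (x y : G) (k : ℤ) : NielsenEquiv ![x, y] ![x, x ^ k * y] := by
  apply ne_step _ ![of 0, of 0 ^ k * of 1] ![of 0, of 0 ^ (-k) * of 1] <;>
    intro i <;> fin_cases i <;>
      simp [← mul_assoc, ← _root_.zpow_add]

open FreeGroup in
lemma move_conj_fst (x y : G) : NielsenEquiv ![x, y] ![y * x * y⁻¹, y] := by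
  apply ne_step _ ![of 1 * of 0 * (of 1)⁻¹, of 1] ![(of 1)⁻¹ * of 0 * of 1, of 1] <;>
    intro i <;> fin_cases i <;> simp <;> group

open FreeGroup in
lemma move_conj_fst_inv (x y : G) : NielsenEquiv ![x, y] ![y⁻¹ * x * y, y] := by
  apply ne_step _ ![(of 1)⁻¹ * of 0 * of 1, of 1] ![of 1 * of 0 * (of 1)⁻¹, of 1] <;>
    intro i <;> fin_cases i <;> simp <;> group

end general

section semidirect
open SemidirectProduct Multiplicative
variable (A : GL2Z)

lemma glToAddAut_apply (z : Fin 2 → ℤ) :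
    glToAddAut A z = (A : Matrix (Fin 2) (Fin 2) ℤ).mulVec z := by
  show (Matrix.GeneralLinearGroup.toLin A).toLinearEquiv z = _
  rfl

lemma phiA_ofAdd_one (z : Fin 2 → ℤ) :
    phiA A (ofAdd 1) (ofAdd z) = ofAdd ((A : Matrix (Fin 2) (Fin 2) ℤ).mulVec z) := by
  simp [phiA, glToAddAut_apply]

lemma phiA_ofAdd_neg_one (z : Fin 2 → ℤ) :
    phiA A (ofAdd (-1)) (ofAdd z) = ofAdd ((glToAddAut A).symm z) := by
  simp only [phiA, zpowersHom_apply, toAdd_ofAdd]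
  rw [_root_.zpow_neg, zpow_one]
  rfl

lemma inl_pow (u : Fin 2 → ℤ) (k : ℤ) :
    (inl (ofAdd u) : GA A) ^ k = inl (ofAdd (k • u)) := by
  rw [← map_zpow]
  congr 1

lemma conj_inl (u : Fin 2 → ℤ) (g : GA A) :
    g * inl (ofAdd u) * g⁻¹ = inl (phiA A g.right (ofAdd u)) := by
  ext
  · simp [mul_left, inv_left, mul_comm]
  · simp

/-- Cayley–Hamilton for 2×2 matrices, in `mulVec` form. -/
lemma ch (B : Matrix (Fin 2) (Fin 2) ℤ) (z : Fin 2 → ℤ) :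
    B.mulVec (B.mulVec z) = B.trace • B.mulVec z - B.det • z := by
  funext i
  fin_cases i <;>
    simp [Matrix.mulVec, dotProduct, Fin.sum_univ_two, Matrix.trace,
      Matrix.det_fin_two, Fin.sum_univ_succ, Matrix.diag] <;> ring

lemma det_sq : (A : Matrix (Fin 2) (Fin 2) ℤ).det * (A : Matrix (Fin 2) (Fin 2) ℤ).det = 1 := by
  have h : IsUnit (A : Matrix (Fin 2) (Fin 2) ℤ).det := by
    refine IsUnit.of_mul_eq_one ((A⁻¹ : GL2Z) : Matrix (Fin 2) (Fin 2) ℤ).det ?_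
    rw [← Matrix.det_mul]
    norm_cast
    rw [mul_inv_cancel]
    simp
  rcases Int.isUnit_iff.mp h with h' | h' <;> rw [h'] <;> ring

end semidirect

section span
open SemidirectProduct Multiplicative
variable (A : GL2Z)

/-- The key module-theoretic fact: the span of `{u, Au}` is invariant under `A` and `A⁻¹`. -/
lemma span_invariant (u : Fin 2 → ℤ) :
    let B := (A : Matrix (Fin 2) (Fin 2) ℤ)
    let M := Submodule.span ℤ ({u, B.mulVec u} : Set (Fin 2 → ℤ))
    (∀ z ∈ M, glToAddAut A z ∈ M) ∧ (∀ z ∈ M, (glToAddAut A).symm z ∈ M) := by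
  intro B M
  have hBu : B.mulVec u ∈ M := Submodule.subset_span (by simp)
  have hu : u ∈ M := Submodule.subset_span (by simp)
  have hBBu : B.mulVec (B.mulVec u) ∈ M := by
    rw [ch]
    exact M.sub_mem (M.smul_mem _ hBu) (M.smul_mem _ hu)
  constructor
  · intro z hz
    rw [glToAddAut_apply]
    induction hz using Submodule.span_induction with
    | mem w hw =>
      rcases hw with rfl | hw
      · exact hBu
      · simp only [Set.mem_singleton_iff] at hw; subst hw; exact hBBu
    | zero => simp [Matrix.mulVec_zero]
    | add a b _ _ ha hb => rw [Matrix.mulVec_add]; exact M.add_mem ha hb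
    | smul c a _ ha => rw [Matrix.mulVec_smul]; exact M.smul_mem _ ha
  · -- invariance under the inverse
    have hsymm_u : (glToAddAut A).symm u ∈ M := by
      have key : (glToAddAut A) (B.det • (B.trace • u - B.mulVec u)) = u := by
        rw [glToAddAut_apply]
        rw [Matrix.mulVec_smul, Matrix.mulVec_sub, Matrix.mulVec_smul, ch]
        have : B.trace • B.mulVec u - (B.trace • B.mulVec u - B.det • u) = B.det • u := by abel
        rw [this, smul_smul, det_sq, one_smul]
      rw [← key, AddEquiv.symm_apply_apply]
      exact M.smul_mem _ (M.sub_mem (M.smul_mem _ hu) hBu)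
    have hsymm_Bu : (glToAddAut A).symm (B.mulVec u) ∈ M := by
      rw [← glToAddAut_apply, AddEquiv.symm_apply_apply]
      exact hu
    intro z hz
    induction hz using Submodule.span_induction with
    | mem w hw =>
      rcases hw with rfl | hw
      · exact hsymm_u
      · simp only [Set.mem_singleton_iff] at hw; subst hw; exact hsymm_Bu
    | zero => simp
    | add a b _ _ ha hb => rw [map_add]; exact M.add_mem ha hb
    | smul c a _ ha =>
      rw [map_zsmul]; exact M.smul_mem _ ha

lemma span_phiA_invariant (u : Fin 2 → ℤ)
    (M : Submodule ℤ (Fin 2 → ℤ))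
    (h1 : ∀ z ∈ M, glToAddAut A z ∈ M)
    (h2 : ∀ z ∈ M, (glToAddAut A).symm z ∈ M) :
    ∀ (r : Multiplicative ℤ) (z : Fin 2 → ℤ), z ∈ M → toAdd (phiA A r (ofAdd z)) ∈ M := by
  have key : ∀ (n : ℤ) (z : Fin 2 → ℤ), z ∈ M →
      toAdd (((AddEquiv.toMultiplicative (glToAddAut A)) ^ n) (ofAdd z)) ∈ M := by
    intro n
    induction n using Int.induction_on with
    | zero => intro z hz; simpa using hz
    | succ n IH =>
      intro z hz
      have : ((AddEquiv.toMultiplicative (glToAddAut A)) ^ ((n : ℤ) + 1))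
          = ((AddEquiv.toMultiplicative (glToAddAut A)) ^ (n : ℤ))
            * (AddEquiv.toMultiplicative (glToAddAut A)) := by
        rw [_root_.zpow_add_one]
      rw [this]
      have happ : ((AddEquiv.toMultiplicative (glToAddAut A)) ^ (n : ℤ)
          * (AddEquiv.toMultiplicative (glToAddAut A))) (ofAdd z)
          = ((AddEquiv.toMultiplicative (glToAddAut A)) ^ (n : ℤ))
            (ofAdd (glToAddAut A z)) := rfl
      rw [happ]
      exact IH _ (h1 z hz)
    | pred n IH =>
      intro z hz
      have : ((AddEquiv.toMultiplicative (glToAddAut A)) ^ (-(n : ℤ) - 1))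
          = ((AddEquiv.toMultiplicative (glToAddAut A)) ^ (-(n : ℤ)))
            * (AddEquiv.toMultiplicative (glToAddAut A))⁻¹ := by
        rw [_root_.zpow_sub_one]
      rw [this]
      have happ : ((AddEquiv.toMultiplicative (glToAddAut A)) ^ (-(n : ℤ))
          * (AddEquiv.toMultiplicative (glToAddAut A))⁻¹) (ofAdd z)
          = ((AddEquiv.toMultiplicative (glToAddAut A)) ^ (-(n : ℤ)))
            (ofAdd ((glToAddAut A).symm z)) := rfl
      rw [happ]
      exact IH _ (h2 z hz)
  intro r z hz
  have : phiA A r = (AddEquiv.toMultiplicative (glToAddAut A)) ^ (toAdd r) := by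
    simp [phiA]
  rw [this]
  exact key _ z hz

/-- If `(x,y)` generates `G_A` with `x.right = 1` and `y.right = ofAdd 1`, then
`span {u, Au} = ⊤` where `u = toAdd x.left`. -/
lemma span_top (x y : GA A) (hx : x.right = 1) (hy : y.right = ofAdd 1)
    (hgen : Subgroup.closure ({x, y} : Set (GA A)) = ⊤) :
    Submodule.span ℤ ({toAdd x.left,
      (A : Matrix (Fin 2) (Fin 2) ℤ).mulVec (toAdd x.left)} : Set (Fin 2 → ℤ)) = ⊤ := by
  set u := toAdd x.left with hu
  set B := (A : Matrix (Fin 2) (Fin 2) ℤ) with hB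
  set M := Submodule.span ℤ ({u, B.mulVec u} : Set (Fin 2 → ℤ)) with hM
  obtain ⟨hinv1, hinv2⟩ := span_invariant A u
  have hphi := span_phiA_invariant A u M hinv1 hinv2
  -- the subgroup P of elements (m, 0) with m ∈ M
  set P : Subgroup (GA A) :=
    { carrier := {g | toAdd g.left ∈ M ∧ g.right = 1}
      one_mem' := by simp
      mul_mem' := by
        rintro a b ⟨ha1, ha2⟩ ⟨hb1, hb2⟩
        constructor
        · rw [mul_left, ha2]
          simp only [_root_.map_one, MulAut.one_apply, toAdd_mul]
          exact M.add_mem ha1 hb1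
        · rw [mul_right, ha2, hb2, one_mul]
      inv_mem' := by
        rintro a ⟨ha1, ha2⟩
        constructor
        · rw [inv_left, ha2]
          simp only [inv_one, _root_.map_one, MulAut.one_apply, toAdd_inv]
          exact M.neg_mem ha1
        · rw [inv_right, ha2, inv_one] } with hP
  have hPnormal : P.Normal := by
    constructor
    intro p hp g
    obtain ⟨hp1, hp2⟩ := hp
    constructor
    · show toAdd (g * p * g⁻¹).left ∈ M
      have e2 : (phiA A g.right) ((phiA A g.right⁻¹) g.left⁻¹) = g.left⁻¹ := by
        rw [← MulAut.mul_apply, ← _root_.map_mul, mul_inv_cancel, _root_.map_one, MulAut.one_apply]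
      have : (g * p * g⁻¹).left = phiA A g.right p.left := by
        rw [mul_left, mul_left, inv_left, mul_right, hp2, mul_one, e2]
        exact mul_inv_cancel_comm _ _
      rw [this]
      have := hphi g.right (toAdd p.left) hp1
      simpa using this
    · show (g * p * g⁻¹).right = 1
      rw [mul_right, mul_right, inv_right, hp2, mul_one, mul_inv_cancel]
  -- x ∈ P
  have hxP : x ∈ P := by
    constructor
    · exact Submodule.subset_span (Set.mem_insert _ _)
    · exact hx
  have hyZ : y ∈ Subgroup.zpowers y := Subgroup.mem_zpowers y
  have htop : P ⊔ Subgroup.zpowers y = ⊤ := by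
    rw [eq_top_iff, ← hgen]
    apply Subgroup.closure_le _ |>.mpr
    rintro g (rfl | rfl)
    · exact Subgroup.mem_sup_left hxP
    · exact Subgroup.mem_sup_right hyZ
  rw [eq_top_iff]
  intro m _
  -- the element (m, 0) lies in P ⊔ zpowers y = P * zpowers y
  have hmem : (inl (ofAdd m) : GA A) ∈ ((P ⊔ Subgroup.zpowers y : Subgroup (GA A)) : Set (GA A)) := by
    rw [htop]; trivial
  rw [Subgroup.normal_mul] at hmem
  obtain ⟨p, hpP, q, hqZ, hpq0⟩ := hmem
  obtain ⟨k, hk0'⟩ := hqZ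
  have hpq : p * q = inl (ofAdd m) := hpq0
  have hk : y ^ k = q := hk0'
  -- compare right components
  have hright : (inl (ofAdd m) : GA A).right = p.right * q.right := by
    rw [← hpq, mul_right]
  rw [right_inl, hpP.2, one_mul, ← hk] at hright
  have hqright : (y ^ k).right = ofAdd k := by
    rw [← SemidirectProduct.rightHom_eq_right, map_zpow, SemidirectProduct.rightHom_eq_right, hy]
    simp [← ofAdd_zsmul]
  rw [hqright] at hright
  have hk0 : k = 0 := by
    have := congrArg toAdd hright
    simpa using this.symm
  have hq1 : q = 1 := by rw [← hk, hk0]; simp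
  rw [hq1, mul_one] at hpq
  have := hpP.1
  rw [hpq] at this
  simpa using this

end span

section euclid
open SemidirectProduct Multiplicative
variable {A : GL2Z}

lemma range_two {G : Type*} [Group G] (S : Fin 2 → G) : Set.range S = {S 0, S 1} := by
  ext g
  constructor
  · rintro ⟨i, rfl⟩; fin_cases i <;> simp
  · rintro (rfl | rfl)
    · exact ⟨0, rfl⟩
    · exact ⟨1, rfl⟩

lemma right_zpow (g : GA A) (k : ℤ) : (g ^ k).right = g.right ^ k := by
  rw [← SemidirectProduct.rightHom_eq_right, map_zpow, SemidirectProduct.rightHom_eq_right]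

lemma euclid (A : GL2Z) (n : ℕ) : ∀ S : Fin 2 → GA A,
    Subgroup.closure (Set.range S) = ⊤ → (toAdd (S 1).right).natAbs = n →
    ∃ x y : GA A, x.right = 1 ∧ y.right = ofAdd 1 ∧ NielsenEquiv S ![x, y] := by
  induction n using Nat.strong_induction_on with
  | _ n IH =>
  intro S hS hn
  have hSpair : S = ![S 0, S 1] := by
    funext i; fin_cases i <;> simp
  by_cases hb : toAdd (S 1).right = 0
  · -- base case: second right component is trivial, first must be ±1
    have hy1 : (S 1).right = 1 := by
      have := congrArg ofAdd hb; simpa using this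
    have hcl : Subgroup.closure ((SemidirectProduct.rightHom : GA A →* Multiplicative ℤ) ''
        (Set.range S)) = (⊤ : Subgroup (Multiplicative ℤ)) := by
      rw [← MonoidHom.map_closure, hS, ← MonoidHom.range_eq_map,
        MonoidHom.range_eq_top_of_surjective _ SemidirectProduct.rightHom_surjective]
    have himg : (SemidirectProduct.rightHom : GA A →* Multiplicative ℤ) '' (Set.range S)
        = {(S 0).right, 1} := by
      rw [range_two, Set.image_pair]
      simp [hy1]
    rw [himg] at hcl
    have hle : Subgroup.closure ({(S 0).right, 1} : Set (Multiplicative ℤ))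
        ≤ Subgroup.closure {(S 0).right} := by
      apply (Subgroup.closure_le _).mpr
      rintro g (rfl | rfl)
      · exact Subgroup.subset_closure rfl
      · exact Subgroup.one_mem _
    have h1mem : ofAdd (1 : ℤ) ∈ Subgroup.closure ({(S 0).right} : Set (Multiplicative ℤ)) :=
      hle (by rw [hcl]; trivial)
    obtain ⟨kk, hkk⟩ := Subgroup.mem_closure_singleton.mp h1mem
    have hmul : toAdd (S 0).right * kk = 1 := by
      have := congrArg toAdd hkk
      rw [toAdd_zpow, toAdd_ofAdd, smul_eq_mul] at this
      linarith
    rcases Int.isUnit_iff.mp (IsUnit.of_mul_eq_one kk hmul) with ha | ha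
    · refine ⟨S 1, S 0, hy1, ?_, ?_⟩
      · rw [← ofAdd_toAdd (S 0).right, ha]
      · have := NielsenAux.move_swap (S 0) (S 1)
        rwa [← hSpair] at this
    · refine ⟨S 1, (S 0)⁻¹, hy1, ?_, ?_⟩
      · rw [inv_right, ← ofAdd_toAdd (S 0).right, ha]
        rfl
      · have t1 := NielsenAux.move_inv_fst (S 0) (S 1)
        rw [← hSpair] at t1
        exact NielsenAux.ne_trans t1 (NielsenAux.move_swap _ _)
  · -- inductive step: Euclidean division
    set b := toAdd (S 1).right with hbdef
    set a := toAdd (S 0).right with hadef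
    set qq := a / b with hq
    have t1 : NielsenEquiv S ![S 0 * (S 1) ^ (-qq), S 1] := by
      have := NielsenAux.move_mul_right_pow (S 0) (S 1) (-qq)
      rwa [← hSpair] at this
    have tt : NielsenEquiv S ![S 1, S 0 * (S 1) ^ (-qq)] :=
      NielsenAux.ne_trans t1 (NielsenAux.move_swap _ _)
    have hgenT := NielsenAux.ne_closure tt hS
    have hT1 : toAdd ((![S 1, S 0 * (S 1) ^ (-qq)] : Fin 2 → GA A) 1).right = a % b := by
      show toAdd (S 0 * (S 1) ^ (-qq)).right = a % b
      rw [mul_right, right_zpow, toAdd_mul, toAdd_zpow, smul_eq_mul, ← hadef, ← hbdef,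
        Int.emod_def, hq]
      ring
    have hlt : (a % b).natAbs < n := by
      rw [← hn]
      have h1 : 0 ≤ a % b := Int.emod_nonneg a hb
      have h2 : a % b < |b| := by
        rcases lt_or_gt_of_ne hb with hb' | hb'
        · rw [← Int.emod_neg]
          simpa [abs_of_neg hb'] using Int.emod_lt_of_pos a (by omega : (0:ℤ) < -b)
        · simpa [abs_of_pos hb'] using Int.emod_lt_of_pos a hb'
      rcases abs_cases b with ⟨e, _⟩ | ⟨e, _⟩ <;> omega
    obtain ⟨x, y, hx, hy, hxy⟩ :=
      IH (a % b).natAbs hlt ![S 1, S 0 * (S 1) ^ (-qq)] hgenT (by rw [hT1])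
    exact ⟨x, y, hx, hy, NielsenAux.ne_trans tt hxy⟩

end euclid
end NielsenAux

open NielsenAux SemidirectProduct Multiplicative in
theorem generating_pair_normal_form (A : GL2Z)
    (h2 : ∃ x y : GA A, Subgroup.closure ({x, y} : Set (GA A)) = ⊤) :
    ∀ S : Fin 2 → GA A, Subgroup.closure (Set.range S) = ⊤ →
      ∃ v : Fin 2 → ℤ,
        Submodule.span ℤ ({v, (A : Matrix (Fin 2) (Fin 2) ℤ).mulVec v} : Set (Fin 2 → ℤ)) = ⊤ ∧
        NielsenEquiv S ![⟨Multiplicative.ofAdd v, 1⟩, ⟨1, Multiplicative.ofAdd 1⟩] := by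
  clear h2
  intro S hS
  obtain ⟨x, y, hx, hy, hne⟩ := NielsenAux.euclid A (toAdd (S 1).right).natAbs S hS rfl
  have hgen : Subgroup.closure ({x, y} : Set (GA A)) = ⊤ := by
    have := ne_closure hne hS
    rwa [range_two] at this
  set B := (A : Matrix (Fin 2) (Fin 2) ℤ) with hB
  set u := toAdd x.left with hu
  set w := toAdd y.left with hwdef
  have hxform : x = inl (ofAdd u) := by
    ext
    · rw [left_inl, hu, ofAdd_toAdd]
    · rw [right_inl, hx]
  have hM := span_top A x y hx hy hgen
  have hw : w ∈ Submodule.span ℤ ({u, B.mulVec u} : Set (Fin 2 → ℤ)) := by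
    rw [hM]; trivial
  obtain ⟨c₀, c₁, hc⟩ := Submodule.mem_span_pair.mp hw
  -- step 1 : (x, y) → (x, x^(-c₀) * y)
  set y1 : GA A := ⟨ofAdd ((-c₀) • u + w), ofAdd 1⟩ with hy1def
  have hy1eq : x ^ (-c₀) * y = y1 := by
    rw [hxform, inl_pow]
    ext : 1
    · rw [mul_left, right_inl, _root_.map_one, MulAut.one_apply, hy1def]
      show ofAdd ((-c₀) • u) * y.left = ofAdd ((-c₀) • u + w)
      rw [← ofAdd_toAdd y.left, ← ofAdd_add, ← hwdef]
    · rw [mul_right, right_inl, one_mul, hy1def, hy]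
  have step1 : NielsenEquiv ![x, y] ![x, y1] := by
    have := move_mul_left_snd_pow x y (-c₀)
    rwa [hy1eq] at this
  -- step 2 : conjugate x by y1
  set x2 : GA A := inl (ofAdd (B.mulVec u)) with hx2def
  have hconj : y1 * x * y1⁻¹ = x2 := by
    rw [hxform, conj_inl]
    have : y1.right = ofAdd 1 := rfl
    rw [this, phiA_ofAdd_one]
  have step2 : NielsenEquiv ![x, y1] ![x2, y1] := by
    have := move_conj_fst x y1
    rwa [hconj] at this
  -- step 3 : (x2, y1) → (x2, x2^(-c₁) * y1)
  set y2 : GA A := ⟨1, ofAdd 1⟩ with hy2def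
  have hy2eq : x2 ^ (-c₁) * y1 = y2 := by
    rw [hx2def, inl_pow]
    ext : 1
    · rw [mul_left, right_inl, _root_.map_one, MulAut.one_apply]
      show ofAdd ((-c₁) • B.mulVec u) * ofAdd ((-c₀) • u + w) = (1 : Multiplicative (Fin 2 → ℤ))
      rw [← ofAdd_add, ← ofAdd_zero]
      congr 1
      rw [← hc]
      module
    · rw [mul_right, right_inl, one_mul]
  have step3 : NielsenEquiv ![x2, y1] ![x2, y2] := by
    have := move_mul_left_snd_pow x2 y1 (-c₁)
    rwa [hy2eq] at this
  -- step 4 : conjugate x2 back by y2⁻¹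
  have hconj2 : y2⁻¹ * x2 * y2 = inl (ofAdd u) := by
    have h4 : y2⁻¹ * x2 * (y2⁻¹)⁻¹ = inl (phiA A (y2⁻¹.right) (ofAdd (B.mulVec u))) := by
      rw [hx2def]; exact conj_inl A _ _
    rw [inv_inv] at h4
    rw [h4]
    have h5 : (y2⁻¹).right = ofAdd (-1) := by
      rw [inv_right]
      rfl
    rw [h5, phiA_ofAdd_neg_one]
    congr 1
    rw [← glToAddAut_apply, AddEquiv.symm_apply_apply]
  have step4 : NielsenEquiv ![x2, y2] ![inl (ofAdd u), y2] := by
    have := move_conj_fst_inv x2 y2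
    rwa [hconj2] at this
  refine ⟨u, hM, ?_⟩
  have hfinal : NielsenEquiv S ![inl (ofAdd u), y2] :=
    ne_trans hne (ne_trans step1 (ne_trans step2 (ne_trans step3 step4)))
  have : (inl (ofAdd u) : GA A) = ⟨ofAdd u, 1⟩ := rfl
  rwa [this] at hfinal
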